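/- arXiv:math/0310229 — 3 statements merged into one kernel-verified Lean document; each statement's English description precedes it below -/
import Mathlib

section
/- Let N ≥ 2 be an integer, let (c_j)_{j ≥ 0} be positive reals with c* := inf_j c_j > 0, and let (h_j)_{j ≥ 1} be positive reals with h_j ≥ c_{j-1} N^{−(j−1)/2} for all j ≥ 1. For x, y ∈ Ω_N and t ≥ 0 define p_t(x,y) := (δ_{0,|x−y|} − 1) e^{−h_{|x−y|} t} N^{−|x−y|} + (N−1) Σ_{j=|x−y|+1}^∞ e^{−h_j t} N^{−j}. Then there exist constants C, C' depending only on c* (and not on N) such that for all functions φ_1, φ_2 : Ω_N → [0,∞): (i) Σ_{x,y ∈ Ω_N} φ_1(x) φ_2(y) ∫_0^∞ p_t(x,y) dt ≤ C Σ_{x,y ∈ Ω_N} φ_1(x) φ_2(y) N^{−|x−y|/2}, and (ii) Σ_{x,y ∈ Ω_N} φ_1(x) φ_2(y) ∫_0^∞ t·p_t(x,y) dt ≤ C' Σ_{x,y ∈ Ω_N} φ_1(x) φ_2(y) Σ_{j=|x−y|}^∞ c_j^{−2}. -/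
open MeasureTheory ENNReal NNReal
section AuxGreen
open Set

lemma integral_exp_Ioi {b : ℝ} (hb : 0 < b) :
    ∫ s in Set.Ioi (0:ℝ), Real.exp (-b * s) = 1/b := by
  have := Real.integral_rpow_mul_exp_neg_mul_Ioi (a := 1) one_pos hb
  simpa [Real.Gamma_one, neg_mul] using this

lemma Gamma_two' : Real.Gamma 2 = 1 := by
  have := Real.Gamma_nat_eq_factorial 1
  norm_num at this
  simpa using this

lemma integral_texp_Ioi {b : ℝ} (hb : 0 < b) :
    ∫ s in Set.Ioi (0:ℝ), s * Real.exp (-b * s) = 1/b^2 := by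
  have := Real.integral_rpow_mul_exp_neg_mul_Ioi (a := 2) two_pos hb
  rw [Gamma_two', mul_one, show (2:ℝ) - 1 = 1 by norm_num,
    show (2:ℝ) = ((2:ℕ):ℝ) by norm_num, Real.rpow_natCast] at this
  simp only [Real.rpow_one, neg_mul, div_pow, one_pow] at this
  simpa [neg_mul] using this

lemma lint_exp {b K : ℝ} (hb : 0 < b) (hK : 0 ≤ K) :
    ∫⁻ s in Set.Ioi (0:ℝ), ENNReal.ofReal (K * Real.exp (-b * s)) = ENNReal.ofReal (K * (1/b)) := by
  rw [← ofReal_integral_eq_lintegral_ofReal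
    ((exp_neg_integrableOn_Ioi 0 hb).const_mul K)
    (Filter.Eventually.of_forall fun s => by positivity)]
  rw [integral_const_mul, integral_exp_Ioi hb]

lemma lint_texp {b K : ℝ} (hb : 0 < b) (hK : 0 ≤ K) :
    ∫⁻ s in Set.Ioi (0:ℝ), ENNReal.ofReal (K * (s * Real.exp (-b * s))) = ENNReal.ofReal (K * (1/b^2)) := by
  have hint : IntegrableOn (fun s : ℝ => s * Real.exp (-b * s)) (Set.Ioi 0) := by
    have := integrableOn_rpow_mul_exp_neg_mul_rpow (s := 1) (p := 1) (by norm_num) (by norm_num) hb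
    simpa [Real.rpow_one] using this
  rw [← ofReal_integral_eq_lintegral_ofReal (hint.const_mul K)
    (((ae_restrict_iff' measurableSet_Ioi).2 (Filter.Eventually.of_forall fun s hs => by
      have : (0:ℝ) < s := hs
      positivity)))]
  rw [integral_const_mul, integral_texp_Ioi hb]

lemma ofReal_tsum_le (f : ℕ → ℝ) (hf : ∀ n, 0 ≤ f n) :
    ENNReal.ofReal (∑' n, f n) ≤ ∑' n, ENNReal.ofReal (f n) := by
  by_cases hs : Summable f
  · exact le_of_eq (ENNReal.ofReal_tsum_of_nonneg hf hs)
  · rw [tsum_eq_zero_of_not_summable hs]; simp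

lemma tsum_shift (f : ℕ → ℝ≥0∞) (m : ℕ) :
    ∑' j : ℕ, (if m ≤ j then f (j - m) else 0) = ∑' k, f k := by
  have h := Summable.sum_add_tsum_nat_add' (f := fun j : ℕ => if m ≤ j then f (j - m) else 0) (k := m) ENNReal.summable
  rw [← h]
  have h1 : ∑ i ∈ Finset.range m, (if m ≤ i then f (i - m) else 0) = 0 := by
    apply Finset.sum_eq_zero
    intro i hi
    simp [Nat.not_le.2 (Finset.mem_range.1 hi)]
  have h2 : ∀ i : ℕ, (if m ≤ i + m then f (i + m - m) else 0) = f i := by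
    intro i; simp
  rw [h1, zero_add]
  exact tsum_congr h2

-- q facts
lemma q_facts {N : ℕ} (hN : 2 ≤ N) :
    0 < (N:ℝ) ^ (-(1/2) : ℝ) ∧ (N:ℝ) ^ (-(1/2) : ℝ) ≤ 3/4 ∧
      ((N:ℝ) ^ (-(1/2) : ℝ))^2 * (N:ℝ) = 1 := by
  have ha2 : (2:ℝ) ≤ (N:ℝ) := by exact_mod_cast hN
  have ha0 : (0:ℝ) < N := by linarith
  refine ⟨Real.rpow_pos_of_pos ha0 _, ?_, ?_⟩
  · have h1 : (2:ℝ) ^ ((1/2):ℝ) ≤ (N:ℝ) ^ ((1/2):ℝ) :=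
      Real.rpow_le_rpow (by norm_num) ha2 (by norm_num)
    have h2 : (4/3 : ℝ) ≤ (2:ℝ) ^ ((1/2):ℝ) := by
      rw [← Real.sqrt_eq_rpow]
      nlinarith [Real.sq_sqrt (by norm_num : (0:ℝ) ≤ 2), Real.sqrt_nonneg 2]
    have h3 : (4/3 : ℝ) ≤ (N:ℝ) ^ ((1/2):ℝ) := le_trans h2 h1
    have h4 : (0:ℝ) < (N:ℝ) ^ ((1/2):ℝ) := Real.rpow_pos_of_pos ha0 _
    rw [Real.rpow_neg ha0.le]
    rw [inv_le_comm₀ h4 (by norm_num)] at *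
    · linarith
  · have : (((N:ℝ) ^ (-(1/2) : ℝ))^2 : ℝ) = (N:ℝ) ^ ((-(1/2) : ℝ) * 2) := by
      rw [Real.rpow_mul ha0.le, Real.rpow_two]
    rw [this]
    norm_num
    rw [Real.rpow_neg_one]
    field_simp

lemma rpow_eq_qpow {N : ℕ} (hN : 2 ≤ N) (j : ℕ) (hj : 1 ≤ j) :
    (N:ℝ) ^ (-(((j:ℝ)-1)/2)) = ((N:ℝ) ^ (-(1/2) : ℝ)) ^ (j - 1) := by
  have ha0 : (0:ℝ) < N := by have h2 := hN; positivity
  have hc : ((j:ℝ) - 1) = ((j - 1 : ℕ) : ℝ) := by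
    rw [Nat.cast_sub hj]; norm_num
  rw [hc, ← Real.rpow_natCast ((N:ℝ) ^ (-(1/2) : ℝ)) (j-1), ← Real.rpow_mul ha0.le]
  congr 1
  ring

lemma rpow_eq_qpow' {N : ℕ} (hN : 2 ≤ N) (d : ℕ) :
    (N:ℝ) ^ (-((d:ℝ)/2)) = ((N:ℝ) ^ (-(1/2) : ℝ)) ^ d := by
  have ha0 : (0:ℝ) < N := by have : 2 ≤ N := hN; positivity
  rw [← Real.rpow_natCast ((N:ℝ) ^ (-(1/2) : ℝ)) d, ← Real.rpow_mul ha0.le]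
  congr 1
  ring

lemma term_bound {a q cst hj : ℝ} (ha : 2 ≤ a) (hq0 : 0 < q) (hq34 : q ≤ 3/4)
    (hq2 : q^2 * a = 1) (hcst : 0 < cst) (d k : ℕ)
    (hhj : cst * q^(d+k) ≤ hj) (hj0 : 0 < hj) :
    (a-1)/a^(d+1+k) * (1/hj) ≤ cst⁻¹ * (q^d * (3/4)^k) := by
  have ha0 : (0:ℝ) < a := by linarith
  have hcq : 0 < cst * q^(d+k) := by positivity
  have h1 : 1/hj ≤ 1/(cst * q^(d+k)) := one_div_le_one_div_of_le hcq hhj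
  have ham : (1:ℝ)/a^(d+1+k) = q^(2*(d+1+k)) := by
    have h2 : a^(d+1+k) * q^(2*(d+1+k)) = 1 := by
      have h3 : (q^2*a)^(d+1+k) = 1 := by rw [hq2]; exact one_pow _
      calc a^(d+1+k) * q^(2*(d+1+k)) = (q^2*a)^(d+1+k) := by
            rw [mul_pow, pow_mul]; ring
        _ = 1 := h3
    field_simp at h2 ⊢
    linarith [h2]
  have key : (a-1)/a^(d+1+k) * (1/(cst * q^(d+k)))
      = cst⁻¹ * (((a-1)*q^2) * (q^d * q^k)) := by
    have e1 : (a-1)/a^(d+1+k) = (a-1) * q^(2*(d+1+k)) := by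
      rw [div_eq_mul_one_div, ham]
    rw [e1]
    field_simp
    ring
  have h5 : (a-1)*q^2 ≤ 1 := by nlinarith [sq_nonneg q]
  have h6 : q^k ≤ (3/4:ℝ)^k := pow_le_pow_left₀ hq0.le hq34 k
  calc (a-1)/a^(d+1+k) * (1/hj) ≤ (a-1)/a^(d+1+k) * (1/(cst * q^(d+k))) := by
        apply mul_le_mul_of_nonneg_left h1 (div_nonneg (by linarith) (by positivity))
    _ = cst⁻¹ * (((a-1)*q^2) * (q^d * q^k)) := key
    _ ≤ cst⁻¹ * (q^d * (3/4)^k) := by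
        apply mul_le_mul_of_nonneg_left _ (inv_nonneg.2 hcst.le)
        calc ((a-1)*q^2) * (q^d * q^k) ≤ 1 * (q^d * q^k) :=
              mul_le_mul_of_nonneg_right h5 (by positivity)
          _ = q^d * q^k := one_mul _
          _ ≤ q^d * (3/4)^k := mul_le_mul_of_nonneg_left h6 (by positivity)

lemma term_bound2 {a q cj hj : ℝ} (ha : 2 ≤ a) (hq0 : 0 < q)
    (hq2 : q^2 * a = 1) (hcj : 0 < cj) (j : ℕ) (hj1 : 1 ≤ j)
    (hhj : cj * q^(j-1) ≤ hj) (hj0 : 0 < hj) :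
    (a-1)/a^j * (1/hj^2) ≤ (cj^2)⁻¹ := by
  obtain ⟨m, rfl⟩ : ∃ m, j = m+1 := ⟨j-1, by omega⟩
  simp only [Nat.add_sub_cancel] at hhj
  have ha0 : (0:ℝ) < a := by linarith
  have hcq : 0 < cj * q^m := by positivity
  have h1 : 1/hj^2 ≤ 1/(cj * q^m)^2 := by
    apply one_div_le_one_div_of_le (by positivity)
    exact pow_le_pow_left₀ hcq.le hhj 2
  have ham : (1:ℝ)/a^(m+1) = q^(2*(m+1)) := by
    have h2 : a^(m+1) * q^(2*(m+1)) = 1 := by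
      have h3 : (q^2*a)^(m+1) = 1 := by rw [hq2]; exact one_pow _
      calc a^(m+1) * q^(2*(m+1)) = (q^2*a)^(m+1) := by rw [mul_pow, pow_mul]; ring
        _ = 1 := h3
    field_simp at h2 ⊢
    linarith [h2]
  have key : (a-1)/a^(m+1) * (1/(cj * q^m)^2) = (cj^2)⁻¹ * ((a-1)*q^2) := by
    have e1 : (a-1)/a^(m+1) = (a-1) * q^(2*(m+1)) := by
      rw [div_eq_mul_one_div, ham]
    rw [e1]
    field_simp
    ring
  have h5 : (a-1)*q^2 ≤ 1 := by nlinarith [sq_nonneg q]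
  calc (a-1)/a^(m+1) * (1/hj^2) ≤ (a-1)/a^(m+1) * (1/(cj * q^m)^2) := by
        apply mul_le_mul_of_nonneg_left h1 (div_nonneg (by linarith) (by positivity))
    _ = (cj^2)⁻¹ * ((a-1)*q^2) := key
    _ ≤ (cj^2)⁻¹ * 1 := mul_le_mul_of_nonneg_left h5 (by positivity)
    _ = (cj^2)⁻¹ := mul_one _

end AuxGreen

/-- The hierarchical group `Ω_N`: sequences in `{0,…,N−1}` with all but finitely many entries
zero, under componentwise addition mod `N`. -/
abbrev HGroup (N : ℕ) : Type := ℕ →₀ ZMod N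

/-- The hierarchical distance `|x − y|`: `0` if `x = y`, and `1 + max{n : xₙ ≠ yₙ}` otherwise. -/
noncomputable def hdist {N : ℕ} (x y : HGroup N) : ℕ :=
  (x - y).support.sup (fun n => n + 1)

/-- The transition probability of the `(2,(c_j),N)`-hierarchical random walk:
`p_t(x,y) = (δ_{0,|x−y|} − 1) e^{−h_{|x−y|} t} N^{−|x−y|} + (N−1) ∑_{j>|x−y|} e^{−h_j t} N^{−j}`. -/
noncomputable def hrwP (N : ℕ) (h : ℕ → ℝ) (t : ℝ) (x y : HGroup N) : ℝ :=
  ((if hdist x y = 0 then (1 : ℝ) else 0) - 1) *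
      Real.exp (-h (hdist x y) * t) / (N : ℝ) ^ (hdist x y) +
    ((N : ℝ) - 1) * ∑' j : ℕ,
      if hdist x y < j then Real.exp (-h j * t) / (N : ℝ) ^ j else 0


section Core
open Set

lemma coreA (cstar : ℝ) (hcstar : 0 < cstar) {N : ℕ} (hN : 2 ≤ N) (c h : ℕ → ℝ)
    (hcs : ∀ j, cstar ≤ c j) (hh : ∀ j, 0 < h j)
    (hch : ∀ j : ℕ, 1 ≤ j → c (j - 1) * (N : ℝ) ^ (-(((j : ℝ) - 1) / 2)) ≤ h j)
    (x y : HGroup N) :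
    ∫⁻ s in Set.Ioi (0:ℝ), ENNReal.ofReal (hrwP N h s x y)
      ≤ ENNReal.ofReal (4/cstar) * ENNReal.ofReal ((N:ℝ) ^ (-((hdist x y : ℝ)/2))) := by
  obtain ⟨hq0, hq34, hq2⟩ := q_facts hN
  set d := hdist x y with hd
  set a := (N:ℝ) with ha
  set q := a ^ (-(1/2):ℝ) with hq
  have ha2 : (2:ℝ) ≤ a := by rw [ha]; exact_mod_cast hN
  have ha0 : (0:ℝ) < a := by linarith
  set F : ℕ → ℝ → ℝ≥0∞ := fun j s =>
    if d < j then ENNReal.ofReal ((a-1) * (Real.exp (-h j * s) / a^j)) else 0 with hF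
  have step1 : ∀ s : ℝ, ENNReal.ofReal (hrwP N h s x y) ≤ ∑' j, F j s := by
    intro s
    have hfirst : ((if d = 0 then (1:ℝ) else 0) - 1) * Real.exp (-h d * s) / a^d ≤ 0 := by
      apply div_nonpos_of_nonpos_of_nonneg _ (by positivity)
      exact mul_nonpos_of_nonpos_of_nonneg (by split <;> norm_num) (Real.exp_nonneg _)
    have h2 : hrwP N h s x y ≤ (a-1) * ∑' j, (if d < j then Real.exp (-h j * s)/a^j else 0) := by
      rw [hrwP]
      rw [← hd, ← ha]
      linarith [hfirst]
    calc ENNReal.ofReal (hrwP N h s x y)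
        ≤ ENNReal.ofReal ((a-1) * ∑' j, (if d < j then Real.exp (-h j * s)/a^j else 0)) :=
          ENNReal.ofReal_le_ofReal h2
      _ = ENNReal.ofReal (∑' j, (a-1) * (if d < j then Real.exp (-h j * s)/a^j else 0)) := by
          rw [_root_.tsum_mul_left]
      _ ≤ ∑' j, ENNReal.ofReal ((a-1) * (if d < j then Real.exp (-h j * s)/a^j else 0)) :=
          ofReal_tsum_le _ (fun n => mul_nonneg (by linarith) (by split <;> positivity))
      _ = ∑' j, F j s := by
          refine tsum_congr fun j => ?_
          by_cases hj : d < j <;> simp [hF, hj]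
  have step2 : ∫⁻ s in Set.Ioi (0:ℝ), (∑' j, F j s) = ∑' j, ∫⁻ s in Set.Ioi (0:ℝ), F j s := by
    apply lintegral_tsum
    intro j
    by_cases hj : d < j
    · simp only [hF, if_pos hj]
      exact (ENNReal.measurable_ofReal.comp
        (((Real.measurable_exp.comp (measurable_id.const_mul (-h j))).div_const _).const_mul _)).aemeasurable
    · simp only [hF, if_neg hj]
      exact aemeasurable_const
  have step3 : ∀ j, ∫⁻ s in Set.Ioi (0:ℝ), F j s
      = if d < j then ENNReal.ofReal ((a-1)/a^j * (1/h j)) else 0 := by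
    intro j
    by_cases hj : d < j
    · simp only [hF, if_pos hj]
      have e : ∀ s : ℝ, (a-1) * (Real.exp (-h j * s)/a^j) = ((a-1)/a^j) * Real.exp (-h j * s) :=
        fun s => by ring
      simp_rw [e]
      exact lint_exp (hh j) (div_nonneg (by linarith) (by positivity))
    · simp [hF, hj]
  have step4 : ∀ j : ℕ, (if d < j then ENNReal.ofReal ((a-1)/a^j * (1/h j)) else 0)
      ≤ (if d+1 ≤ j then (fun k => ENNReal.ofReal (cstar⁻¹ * (q^d * (3/4:ℝ)^k))) (j - (d+1)) else 0) := by
    intro j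
    by_cases hj : d < j
    · rw [if_pos hj, if_pos (show d+1 ≤ j from by omega)]
      set k := j - (d+1) with hk
      have hjk : j = d+1+k := by omega
      apply ENNReal.ofReal_le_ofReal
      have hhj : cstar * q^(d+k) ≤ h j := by
        have h1 := hch j (by omega)
        have h2 : j - 1 = d+k := by omega
        have h3 : a ^ (-(((j:ℝ) - 1) / 2)) = q^(d+k) := by
          have h4 := rpow_eq_qpow hN j (by omega)
          rw [h2] at h4
          exact h4
        rw [h2] at h1
        calc cstar * q^(d+k) ≤ c (d+k) * q^(d+k) :=
              mul_le_mul_of_nonneg_right (hcs _) (by positivity)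
          _ ≤ h j := by rw [← h3]; exact h1
      rw [hjk]
      rw [hjk] at hhj
      exact term_bound ha2 hq0 hq34 hq2 hcstar d k hhj (hh _)
    · rw [if_neg hj, if_neg (by omega)]
  have step5 : ∑' j : ℕ, (if d+1 ≤ j then (fun k => ENNReal.ofReal (cstar⁻¹ * (q^d * (3/4:ℝ)^k))) (j - (d+1)) else 0)
      = ENNReal.ofReal (4/cstar) * ENNReal.ofReal ((N:ℝ) ^ (-((d : ℝ)/2))) := by
    rw [tsum_shift (fun k => ENNReal.ofReal (cstar⁻¹ * (q^d * (3/4:ℝ)^k))) (d+1)]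
    have hsum : Summable (fun k : ℕ => cstar⁻¹ * (q^d * (3/4:ℝ)^k)) := by
      apply Summable.mul_left
      apply Summable.mul_left
      exact summable_geometric_of_lt_one (by norm_num) (by norm_num)
    rw [← ENNReal.ofReal_tsum_of_nonneg (fun k => by positivity) hsum]
    rw [_root_.tsum_mul_left, _root_.tsum_mul_left, tsum_geometric_of_lt_one (by norm_num) (by norm_num)]
    rw [← ENNReal.ofReal_mul (by positivity)]
    rw [rpow_eq_qpow' hN d]
    congr 1
    norm_num
    ring
  calc ∫⁻ s in Set.Ioi (0:ℝ), ENNReal.ofReal (hrwP N h s x y)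
      ≤ ∫⁻ s in Set.Ioi (0:ℝ), (∑' j, F j s) := lintegral_mono step1
    _ = ∑' j, ∫⁻ s in Set.Ioi (0:ℝ), F j s := step2
    _ = ∑' j : ℕ, (if d < j then ENNReal.ofReal ((a-1)/a^j * (1/h j)) else 0) := tsum_congr step3
    _ ≤ ∑' j : ℕ, (if d+1 ≤ j then (fun k => ENNReal.ofReal (cstar⁻¹ * (q^d * (3/4:ℝ)^k))) (j - (d+1)) else 0) :=
        ENNReal.tsum_le_tsum step4
    _ = ENNReal.ofReal (4/cstar) * ENNReal.ofReal ((N:ℝ) ^ (-((d : ℝ)/2))) := step5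

lemma coreB (cstar : ℝ) (hcstar : 0 < cstar) {N : ℕ} (hN : 2 ≤ N) (c h : ℕ → ℝ)
    (hc : ∀ j, 0 < c j) (hh : ∀ j, 0 < h j)
    (hch : ∀ j : ℕ, 1 ≤ j → c (j - 1) * (N : ℝ) ^ (-(((j : ℝ) - 1) / 2)) ≤ h j)
    (x y : HGroup N) :
    ∫⁻ s in Set.Ioi (0:ℝ), ENNReal.ofReal (s * hrwP N h s x y)
      ≤ ∑' j : ℕ, if hdist x y ≤ j then ENNReal.ofReal ((c j ^ 2)⁻¹) else 0 := by
  obtain ⟨hq0, hq34, hq2⟩ := q_facts hN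
  set d := hdist x y with hd
  set a := (N:ℝ) with ha
  set q := a ^ (-(1/2):ℝ) with hq
  have ha2 : (2:ℝ) ≤ a := by rw [ha]; exact_mod_cast hN
  have ha0 : (0:ℝ) < a := by linarith
  set G : ℕ → ℝ≥0∞ := fun k => if d ≤ k then ENNReal.ofReal ((c k ^ 2)⁻¹) else 0 with hG
  set F : ℕ → ℝ → ℝ≥0∞ := fun j s =>
    if d < j then ENNReal.ofReal (((a-1)/a^j) * (s * Real.exp (-h j * s))) else 0 with hF
  have step1 : ∀ s ∈ Set.Ioi (0:ℝ), ENNReal.ofReal (s * hrwP N h s x y) ≤ ∑' j, F j s := by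
    intro s hs
    have hs0 : (0:ℝ) ≤ s := le_of_lt hs
    have hfirst : ((if d = 0 then (1:ℝ) else 0) - 1) * Real.exp (-h d * s) / a^d ≤ 0 := by
      apply div_nonpos_of_nonpos_of_nonneg _ (by positivity)
      exact mul_nonpos_of_nonpos_of_nonneg (by split <;> norm_num) (Real.exp_nonneg _)
    have h2 : s * hrwP N h s x y
        ≤ (s * (a-1)) * ∑' j, (if d < j then Real.exp (-h j * s)/a^j else 0) := by
      have h3 : hrwP N h s x y ≤ (a-1) * ∑' j, (if d < j then Real.exp (-h j * s)/a^j else 0) := by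
        rw [hrwP]
        rw [← hd, ← ha]
        linarith [hfirst]
      calc s * hrwP N h s x y
          ≤ s * ((a-1) * ∑' j, (if d < j then Real.exp (-h j * s)/a^j else 0)) :=
            mul_le_mul_of_nonneg_left h3 hs0
        _ = (s * (a-1)) * ∑' j, (if d < j then Real.exp (-h j * s)/a^j else 0) := by ring
    calc ENNReal.ofReal (s * hrwP N h s x y)
        ≤ ENNReal.ofReal ((s * (a-1)) * ∑' j, (if d < j then Real.exp (-h j * s)/a^j else 0)) :=
          ENNReal.ofReal_le_ofReal h2
      _ = ENNReal.ofReal (∑' j, (s * (a-1)) * (if d < j then Real.exp (-h j * s)/a^j else 0)) := by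
          rw [_root_.tsum_mul_left]
      _ ≤ ∑' j, ENNReal.ofReal ((s * (a-1)) * (if d < j then Real.exp (-h j * s)/a^j else 0)) :=
          ofReal_tsum_le _ (fun n => mul_nonneg (mul_nonneg hs0 (by linarith))
            (by split <;> positivity))
      _ = ∑' j, F j s := by
          refine tsum_congr fun j => ?_
          by_cases hj : d < j
          · simp only [hF, if_pos hj]
            congr 1
            ring
          · simp [hF, hj]
  have step2 : ∫⁻ s in Set.Ioi (0:ℝ), (∑' j, F j s) = ∑' j, ∫⁻ s in Set.Ioi (0:ℝ), F j s := by
    apply lintegral_tsum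
    intro j
    by_cases hj : d < j
    · simp only [hF, if_pos hj]
      exact (ENNReal.measurable_ofReal.comp
        ((measurable_id.mul (Real.measurable_exp.comp (measurable_id.const_mul (-h j)))).const_mul
          _)).aemeasurable
    · simp only [hF, if_neg hj]
      exact aemeasurable_const
  have step3 : ∀ j, ∫⁻ s in Set.Ioi (0:ℝ), F j s
      = if d < j then ENNReal.ofReal ((a-1)/a^j * (1/h j^2)) else 0 := by
    intro j
    by_cases hj : d < j
    · simp only [hF, if_pos hj]
      exact lint_texp (hh j) (div_nonneg (by linarith) (by positivity))
    · simp [hF, hj]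
  have step4 : ∀ j : ℕ, (if d < j then ENNReal.ofReal ((a-1)/a^j * (1/h j^2)) else 0)
      ≤ (if 1 ≤ j then G (j - 1) else 0) := by
    intro j
    by_cases hj : d < j
    · rw [if_pos hj, if_pos (show 1 ≤ j from by omega)]
      have hGj : G (j-1) = ENNReal.ofReal ((c (j-1) ^ 2)⁻¹) := by
        simp only [hG]
        rw [if_pos (show d ≤ j - 1 from by omega)]
      rw [hGj]
      apply ENNReal.ofReal_le_ofReal
      have hhj : c (j-1) * q^(j-1) ≤ h j := by
        have h1 := hch j (by omega)
        have h3 : a ^ (-(((j:ℝ) - 1) / 2)) = q^(j-1) := rpow_eq_qpow hN j (by omega)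
        rw [← h3]
        exact h1
      exact term_bound2 ha2 hq0 hq2 (hc _) j (by omega) hhj (hh j)
    · rw [if_neg hj]
      exact zero_le
  calc ∫⁻ s in Set.Ioi (0:ℝ), ENNReal.ofReal (s * hrwP N h s x y)
      ≤ ∫⁻ s in Set.Ioi (0:ℝ), (∑' j, F j s) := setLIntegral_mono' measurableSet_Ioi step1
    _ = ∑' j, ∫⁻ s in Set.Ioi (0:ℝ), F j s := step2
    _ = ∑' j : ℕ, (if d < j then ENNReal.ofReal ((a-1)/a^j * (1/h j^2)) else 0) := tsum_congr step3
    _ ≤ ∑' j : ℕ, (if 1 ≤ j then G (j - 1) else 0) := ENNReal.tsum_le_tsum step4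
    _ = ∑' k, G k := tsum_shift G 1
    _ = ∑' j : ℕ, if hdist x y ≤ j then ENNReal.ofReal ((c j ^ 2)⁻¹) else 0 := by rw [hG, hd]

end Core

/-- Green operator bounds for the `(2,(c_j),N)`-hierarchical random walk: there are constants
`C, C'` depending only on `c* = inf_j c_j > 0` (and not on `N`) such that, for all nonnegative
`φ₁, φ₂`,
`⟨φ₁, G_N φ₂⟩ ≤ C ∑_{x,y} φ₁(x)φ₂(y) N^{−|x−y|/2}` and
`⟨φ₁, G_N² φ₂⟩ ≤ C' ∑_{x,y} φ₁(x)φ₂(y) ∑_{j ≥ |x−y|} c_j^{−2}`. -/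
theorem hierarchical_green_bounds (cstar : ℝ) (hcstar : 0 < cstar) :
    ∃ C C' : ℝ≥0,
      ∀ (N : ℕ), 2 ≤ N → ∀ c h : ℕ → ℝ,
        (∀ j, 0 < c j) → (∀ j, cstar ≤ c j) →
        (∀ j, 0 < h j) →
        (∀ j : ℕ, 1 ≤ j → c (j - 1) * (N : ℝ) ^ (-(((j : ℝ) - 1) / 2)) ≤ h j) →
        ∀ φ₁ φ₂ : HGroup N → ℝ≥0∞,
          (∑' x, ∑' y, φ₁ x * φ₂ y *
              ∫⁻ s in Set.Ioi (0 : ℝ), ENNReal.ofReal (hrwP N h s x y) ≤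
            (C : ℝ≥0∞) * ∑' x, ∑' y, φ₁ x * φ₂ y *
              ENNReal.ofReal ((N : ℝ) ^ (-((hdist x y : ℝ) / 2)))) ∧
          (∑' x, ∑' y, φ₁ x * φ₂ y *
              ∫⁻ s in Set.Ioi (0 : ℝ), ENNReal.ofReal (s * hrwP N h s x y) ≤
            (C' : ℝ≥0∞) * ∑' x, ∑' y, φ₁ x * φ₂ y *
              ∑' j : ℕ, if hdist x y ≤ j then ENNReal.ofReal ((c j ^ 2)⁻¹) else 0) := by
  refine ⟨(4/cstar).toNNReal, 1, fun N hN c h hc hcs hh hch φ₁ φ₂ => ⟨?_, ?_⟩⟩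
  · have hC : (((4/cstar).toNNReal : ℝ≥0) : ℝ≥0∞) = ENNReal.ofReal (4/cstar) := rfl
    rw [hC]
    calc ∑' x, ∑' y, φ₁ x * φ₂ y *
          ∫⁻ s in Set.Ioi (0 : ℝ), ENNReal.ofReal (hrwP N h s x y)
        ≤ ∑' x, ∑' y : HGroup N, ENNReal.ofReal (4/cstar) *
            (φ₁ x * φ₂ y * ENNReal.ofReal ((N : ℝ) ^ (-((hdist x y : ℝ) / 2)))) := by
          refine ENNReal.tsum_le_tsum fun x => ENNReal.tsum_le_tsum fun y => ?_
          calc φ₁ x * φ₂ y * ∫⁻ s in Set.Ioi (0 : ℝ), ENNReal.ofReal (hrwP N h s x y)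
              ≤ φ₁ x * φ₂ y * (ENNReal.ofReal (4/cstar) *
                  ENNReal.ofReal ((N : ℝ) ^ (-((hdist x y : ℝ) / 2)))) :=
                mul_le_mul_right (coreA cstar hcstar hN c h hcs hh hch x y) _
            _ = ENNReal.ofReal (4/cstar) *
                (φ₁ x * φ₂ y * ENNReal.ofReal ((N : ℝ) ^ (-((hdist x y : ℝ) / 2)))) := by
                ring
      _ = ENNReal.ofReal (4/cstar) * ∑' x, ∑' y, φ₁ x * φ₂ y *
            ENNReal.ofReal ((N : ℝ) ^ (-((hdist x y : ℝ) / 2))) := by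
          simp_rw [ENNReal.tsum_mul_left]
  · rw [ENNReal.coe_one, one_mul]
    refine ENNReal.tsum_le_tsum fun x => ENNReal.tsum_le_tsum fun y => ?_
    exact mul_le_mul_right (coreB cstar hcstar hN c h hc hh hch x y) _
end

section
/- Let B_ℓ^{(N)} := {x ∈ Ω_N : |x| ≤ ℓ} be the ball of hierarchical radius ℓ (which has N^ℓ elements). Then: (i) sup_{N ≥ 2} N^{−2ℓ} Σ_{x,y ∈ B_ℓ^{(N)}} N^{−|x−y|/2} → 0 as ℓ → ∞; and (ii) if (c_j)_{j ≥ 0} are positive reals with Σ_{j=0}^∞ c_j^{−2} < ∞, then sup_{N ≥ 2} N^{−2ℓ} Σ_{x,y ∈ B_ℓ^{(N)}} Σ_{j=|x−y|}^∞ c_j^{−2} → 0 as ℓ → ∞. -/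
open MeasureTheory ENNReal NNReal Filter

lemma hdist_le_iff {N : ℕ} (x y : HGroup N) (k : ℕ) :
    hdist x y ≤ k ↔ ∀ n, k ≤ n → (x - y) n = 0 := by
  rw [hdist, Finset.sup_le_iff]
  constructor
  · intro h n hn
    by_contra he
    have := h n (Finsupp.mem_support_iff.2 he)
    omega
  · intro h n hn
    rcases Nat.lt_or_ge n k with h' | h'
    · omega
    · exact absurd (h n h') (Finsupp.mem_support_iff.1 hn)

lemma hdist_zero_le_iff {N : ℕ} (x : HGroup N) (k : ℕ) :
    hdist x 0 ≤ k ↔ ∀ n, k ≤ n → x n = 0 := by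
  rw [hdist_le_iff]
  simp

lemma hdist_ball {N : ℕ} {x y : HGroup N} {l : ℕ}
    (hx : hdist x 0 ≤ l) (hy : hdist y 0 ≤ l) : hdist x y ≤ l := by
  rw [hdist_zero_le_iff] at hx hy
  rw [hdist_le_iff]
  intro n hn
  rw [Finsupp.sub_apply, hx n hn, hy n hn, sub_zero]

/-- The ball of radius `l` in `HGroup N` is equivalent to `Fin l → ZMod N`. -/
noncomputable def ballEquiv (N l : ℕ) :
    {x : HGroup N // hdist x 0 ≤ l} ≃ (Fin l → ZMod N) where
  toFun x i := x.1 i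
  invFun f :=
    ⟨Finsupp.onFinset (Finset.range l)
        (fun n => if h : n < l then f ⟨n, h⟩ else 0)
        (fun n hn => Finset.mem_range.2 (by
          by_contra h
          apply hn
          simp [h])),
      by
        rw [hdist_zero_le_iff]
        intro n hn
        rw [Finsupp.onFinset_apply, dif_neg (by omega)]⟩
  left_inv x := by
    apply Subtype.ext
    ext n
    rw [Finsupp.onFinset_apply]
    by_cases h : n < l
    · rw [dif_pos h]
    · rw [dif_neg h, (hdist_zero_le_iff x.1 l).1 x.2 n (by omega)]
  right_inv f := by
    funext i
    simp only [Finsupp.onFinset_apply, dif_pos i.isLt]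

noncomputable instance ballFintype (N l : ℕ) [NeZero N] :
    Fintype {x : HGroup N // hdist x 0 ≤ l} :=
  Fintype.ofEquiv _ (ballEquiv N l).symm

lemma card_ball (N l : ℕ) [NeZero N] :
    Fintype.card {x : HGroup N // hdist x 0 ≤ l} = N ^ l := by
  rw [Fintype.card_congr (ballEquiv N l)]
  simp [ZMod.card]

lemma card_fiber_le (N l k : ℕ) [NeZero N] (x : HGroup N) :
    (Finset.univ.filter
        (fun y : {y : HGroup N // hdist y 0 ≤ l} => hdist x y.1 = k)).card ≤ N ^ k := by
  classical
  have hcard : (Finset.univ : Finset (Fin k → ZMod N)).card = N ^ k := by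
    simp [ZMod.card]
  calc (Finset.univ.filter
        (fun y : {y : HGroup N // hdist y 0 ≤ l} => hdist x y.1 = k)).card
      ≤ (Finset.univ : Finset (Fin k → ZMod N)).card := by
        apply Finset.card_le_card_of_injOn (fun y => fun i : Fin k => (x - y.1) i)
          (fun _ _ => Finset.mem_univ _)
        intro y₁ h₁ y₂ h₂ he
        have hd₁ : hdist x y₁.1 ≤ k := le_of_eq (Finset.mem_filter.1 h₁).2
        have hd₂ : hdist x y₂.1 ≤ k := le_of_eq (Finset.mem_filter.1 h₂).2
        have hsub : x - y₁.1 = x - y₂.1 := by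
          ext n
          rcases Nat.lt_or_ge n k with h | h
          · exact congrFun he ⟨n, h⟩
          · rw [(hdist_le_iff _ _ _).1 hd₁ n h, (hdist_le_iff _ _ _).1 hd₂ n h]
        exact Subtype.ext (sub_right_injective hsub)
    _ = N ^ k := hcard

lemma inner_sum_le (N l : ℕ) [NeZero N] (F : ℕ → ℝ≥0∞)
    (x : {x : HGroup N // hdist x 0 ≤ l}) :
    ∑ y : {y : HGroup N // hdist y 0 ≤ l}, F (hdist x.1 y.1)
      ≤ ∑ k ∈ Finset.range (l + 1), (N : ℝ≥0∞) ^ k * F k := by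
  classical
  rw [← Finset.sum_fiberwise_of_maps_to
    (g := fun y : {y : HGroup N // hdist y 0 ≤ l} => hdist x.1 y.1)
    (t := Finset.range (l + 1))
    (fun y _ => Finset.mem_range.2 (Nat.lt_succ_of_le (hdist_ball x.2 y.2)))
    (fun y => F (hdist x.1 y.1))]
  refine Finset.sum_le_sum fun k _ => ?_
  have heq : ∑ y ∈ Finset.univ.filter
      (fun y : {y : HGroup N // hdist y 0 ≤ l} => hdist x.1 y.1 = k),
      F (hdist x.1 y.1)
      = (Finset.univ.filter
          (fun y : {y : HGroup N // hdist y 0 ≤ l} => hdist x.1 y.1 = k)).card • F k := by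
    rw [← Finset.sum_const]
    exact Finset.sum_congr rfl fun y hy => by rw [(Finset.mem_filter.1 hy).2]
  rw [heq, nsmul_eq_mul]
  apply mul_le_mul_left
  calc ((Finset.univ.filter
        (fun y : {y : HGroup N // hdist y 0 ≤ l} => hdist x.1 y.1 = k)).card : ℝ≥0∞)
      ≤ ((N ^ k : ℕ) : ℝ≥0∞) := Nat.cast_le.2 (card_fiber_le N l k x.1)
    _ = (N : ℝ≥0∞) ^ k := by push_cast; ring

/-- Key uniform bound. -/
lemma key_bound (N l : ℕ) (hN : 2 ≤ N) (F : ℕ → ℝ≥0∞) :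
    (((N : ℝ≥0∞) ^ (2 * l))⁻¹ *
        ∑' x : {x : HGroup N // hdist x 0 ≤ l},
          ∑' y : {y : HGroup N // hdist y 0 ≤ l}, F (hdist x.1 y.1))
      ≤ ∑ k ∈ Finset.range (l + 1), ((2 : ℝ≥0∞) ^ (l - k))⁻¹ * F k := by
  haveI : NeZero N := ⟨by omega⟩
  classical
  set a : ℝ≥0∞ := (N : ℝ≥0∞) with ha
  have ha0 : a ≠ 0 := by
    simp only [ha, ne_eq, Nat.cast_eq_zero]
    omega
  have hat : a ≠ ∞ := ENNReal.natCast_ne_top N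
  have h2a : (2 : ℝ≥0∞) ≤ a := by
    rw [ha]
    exact_mod_cast hN
  set S : ℝ≥0∞ := ∑ k ∈ Finset.range (l + 1), a ^ k * F k with hS
  have step1 : (∑' x : {x : HGroup N // hdist x 0 ≤ l},
      ∑' y : {y : HGroup N // hdist y 0 ≤ l}, F (hdist x.1 y.1)) ≤ a ^ l * S := by
    rw [tsum_fintype]
    calc ∑ x : {x : HGroup N // hdist x 0 ≤ l},
          ∑' y : {y : HGroup N // hdist y 0 ≤ l}, F (hdist x.1 y.1)
        ≤ ∑ _x : {x : HGroup N // hdist x 0 ≤ l}, S := by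
          refine Finset.sum_le_sum fun x _ => ?_
          rw [tsum_fintype]
          exact inner_sum_le N l F x
      _ = (Fintype.card {x : HGroup N // hdist x 0 ≤ l}) • S := by
          rw [Finset.sum_const, Finset.card_univ]
      _ = a ^ l * S := by
          rw [card_ball, nsmul_eq_mul]
          push_cast
          ring
  calc ((a ^ (2 * l))⁻¹ *
        ∑' x : {x : HGroup N // hdist x 0 ≤ l},
          ∑' y : {y : HGroup N // hdist y 0 ≤ l}, F (hdist x.1 y.1))
      ≤ (a ^ (2 * l))⁻¹ * (a ^ l * S) := mul_le_mul_right step1 _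
    _ = ∑ k ∈ Finset.range (l + 1), (a ^ (l - k))⁻¹ * F k := by
        rw [hS, Finset.mul_sum, Finset.mul_sum]
        refine Finset.sum_congr rfl fun k hk => ?_
        have hk' : k ≤ l := by
          have := Finset.mem_range.1 hk; omega
        have hsplit : a ^ (2 * l) = a ^ (l - k) * (a ^ l * a ^ k) := by
          rw [← pow_add, ← pow_add]
          congr 1
          omega
        have hb0 : a ^ l * a ^ k ≠ 0 := mul_ne_zero (pow_ne_zero _ ha0) (pow_ne_zero _ ha0)
        have hbt : a ^ l * a ^ k ≠ ∞ :=
          ENNReal.mul_ne_top (ENNReal.pow_ne_top hat) (ENNReal.pow_ne_top hat)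
        rw [hsplit, ENNReal.mul_inv (Or.inl (pow_ne_zero _ ha0)) (Or.inl (ENNReal.pow_ne_top hat))]
        calc (a ^ (l - k))⁻¹ * (a ^ l * a ^ k)⁻¹ * (a ^ l * (a ^ k * F k))
            = (a ^ (l - k))⁻¹ * (((a ^ l * a ^ k)⁻¹ * (a ^ l * a ^ k)) * F k) := by ring
          _ = (a ^ (l - k))⁻¹ * F k := by
              rw [ENNReal.inv_mul_cancel hb0 hbt, one_mul]
    _ ≤ ∑ k ∈ Finset.range (l + 1), ((2 : ℝ≥0∞) ^ (l - k))⁻¹ * F k := by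
        refine Finset.sum_le_sum fun k _ => ?_
        apply mul_le_mul_left
        exact ENNReal.inv_le_inv.2 (pow_le_pow_left' h2a _)

lemma geom_sum_le_two (l : ℕ) :
    ∑ k ∈ Finset.range (l + 1), ((2 : ℝ≥0∞) ^ (l - k))⁻¹ ≤ 2 := by
  have hreflect : ∑ k ∈ Finset.range (l + 1), ((2 : ℝ≥0∞) ^ (l - k))⁻¹
      = ∑ k ∈ Finset.range (l + 1), ((2 : ℝ≥0∞) ^ k)⁻¹ := by
    have := Finset.sum_range_reflect (fun k => ((2 : ℝ≥0∞) ^ k)⁻¹) (l + 1)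
    simpa using this
  rw [hreflect]
  calc ∑ k ∈ Finset.range (l + 1), ((2 : ℝ≥0∞) ^ k)⁻¹
      ≤ ∑' k : ℕ, ((2 : ℝ≥0∞) ^ k)⁻¹ := ENNReal.sum_le_tsum _
    _ = ∑' k : ℕ, ((2 : ℝ≥0∞)⁻¹) ^ k := by
        simp [ENNReal.inv_pow]
    _ = (1 - 2⁻¹)⁻¹ := ENNReal.tsum_geometric _
    _ = 2 := by rw [ENNReal.one_sub_inv_two, inv_inv]


lemma term_bound_i {N l k : ℕ} (hN : 2 ≤ N) (hk : k ≤ l) :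
    ((2 : ℝ≥0∞) ^ (l - k))⁻¹ * ENNReal.ofReal ((N : ℝ) ^ (-((k : ℝ) / 2)))
      ≤ ENNReal.ofReal ((2 : ℝ) ^ (-((l : ℝ) / 2))) := by
  have hN2 : (2 : ℝ) ≤ (N : ℝ) := by exact_mod_cast hN
  have hstep1 : ENNReal.ofReal ((N : ℝ) ^ (-((k : ℝ) / 2)))
      ≤ ENNReal.ofReal ((2 : ℝ) ^ (-((k : ℝ) / 2))) :=
    ENNReal.ofReal_le_ofReal
      (Real.rpow_le_rpow_of_nonpos (by norm_num) hN2 (neg_nonpos.2 (by positivity)))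
  have hpow : ((2 : ℝ≥0∞) ^ (l - k))⁻¹ = ENNReal.ofReal (((2 : ℝ) ^ (l - k))⁻¹) := by
    rw [ENNReal.ofReal_inv_of_pos (by positivity), ENNReal.ofReal_pow (by norm_num)]
    norm_num
  calc ((2 : ℝ≥0∞) ^ (l - k))⁻¹ * ENNReal.ofReal ((N : ℝ) ^ (-((k : ℝ) / 2)))
      ≤ ((2 : ℝ≥0∞) ^ (l - k))⁻¹ * ENNReal.ofReal ((2 : ℝ) ^ (-((k : ℝ) / 2))) :=
        mul_le_mul_right hstep1 _
    _ = ENNReal.ofReal (((2 : ℝ) ^ (l - k))⁻¹ * (2 : ℝ) ^ (-((k : ℝ) / 2))) := by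
        rw [hpow, ← ENNReal.ofReal_mul (by positivity)]
    _ ≤ ENNReal.ofReal ((2 : ℝ) ^ (-((l : ℝ) / 2))) := by
        apply ENNReal.ofReal_le_ofReal
        have h1 : ((2 : ℝ) ^ (l - k))⁻¹ = (2 : ℝ) ^ (-((l - k : ℕ) : ℝ)) := by
          rw [Real.rpow_neg (by norm_num), Real.rpow_natCast]
        rw [h1, ← Real.rpow_add (by norm_num)]
        apply Real.rpow_le_rpow_of_exponent_le one_le_two
        have hcast : ((l - k : ℕ) : ℝ) = (l : ℝ) - (k : ℝ) := by
          rw [Nat.cast_sub hk]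
        have hkl : (k : ℝ) ≤ (l : ℝ) := by exact_mod_cast hk
        rw [hcast]
        linarith

lemma real_tendsto_aux :
    Tendsto (fun l : ℕ => ((l : ℝ) + 1) * (2 : ℝ) ^ (-((l : ℝ) / 2))) atTop (nhds 0) := by
  set r : ℝ := (2 : ℝ) ^ (-(1 / 2 : ℝ)) with hr
  have hr0 : 0 < r := Real.rpow_pos_of_pos (by norm_num) _
  have hr1 : r < 1 := Real.rpow_lt_one_of_one_lt_of_neg (by norm_num) (by norm_num)
  have hrl : ∀ l : ℕ, (2 : ℝ) ^ (-((l : ℝ) / 2)) = r ^ l := by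
    intro l
    rw [hr, ← Real.rpow_natCast ((2:ℝ) ^ (-(1/2:ℝ))) l, ← Real.rpow_mul (by norm_num)]
    congr 1
    ring
  have hsum : Summable (fun l : ℕ => (l : ℝ) * r ^ l) := by
    have := summable_pow_mul_geometric_of_norm_lt_one (R := ℝ) 1
      (r := r) (by rw [Real.norm_eq_abs, abs_of_pos hr0]; exact hr1)
    simpa using this
  have h1 : Tendsto (fun l : ℕ => (l : ℝ) * r ^ l) atTop (nhds 0) :=
    hsum.tendsto_atTop_zero
  have h2 : Tendsto (fun l : ℕ => r ^ l) atTop (nhds 0) :=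
    tendsto_pow_atTop_nhds_zero_of_lt_one hr0.le hr1
  have h3 := h1.add h2
  rw [add_zero] at h3
  refine h3.congr fun l => ?_
  rw [hrl l]
  ring

/-- Uniform-in-`N` estimates over the balls `B_ℓ^{(N)} = {x : |x| ≤ ℓ}` of the hierarchical
group: (i) `sup_{N ≥ 2} N^{−2ℓ} ∑_{x,y ∈ B_ℓ} N^{−|x−y|/2} → 0` as `ℓ → ∞`, and
(ii) if `∑_j c_j^{−2} < ∞` then `sup_{N ≥ 2} N^{−2ℓ} ∑_{x,y ∈ B_ℓ} ∑_{j ≥ |x−y|} c_j^{−2} → 0`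
as `ℓ → ∞`. -/
theorem ball_sums_vanish_uniformly :
    (Tendsto
      (fun l : ℕ => ⨆ (N : ℕ) (_ : 2 ≤ N),
        (((N : ℝ≥0∞) ^ (2 * l))⁻¹ *
          ∑' x : {x : HGroup N // hdist x 0 ≤ l},
            ∑' y : {y : HGroup N // hdist y 0 ≤ l},
              ENNReal.ofReal ((N : ℝ) ^ (-((hdist x.1 y.1 : ℝ) / 2)))))
      atTop (nhds 0)) ∧
    (∀ c : ℕ → ℝ, (∀ j, 0 < c j) → Summable (fun j => ((c j) ^ 2)⁻¹) →
      Tendsto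
        (fun l : ℕ => ⨆ (N : ℕ) (_ : 2 ≤ N),
          (((N : ℝ≥0∞) ^ (2 * l))⁻¹ *
            ∑' x : {x : HGroup N // hdist x 0 ≤ l},
              ∑' y : {y : HGroup N // hdist y 0 ≤ l},
                ∑' j : ℕ,
                  if hdist x.1 y.1 ≤ j then ENNReal.ofReal (((c j) ^ 2)⁻¹) else 0))
        atTop (nhds 0)) := by
  constructor
  · -- Part (i)
    have hb : Tendsto (fun l : ℕ =>
        ENNReal.ofReal (((l : ℝ) + 1) * (2 : ℝ) ^ (-((l : ℝ) / 2)))) atTop (nhds 0) := by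
      have := ENNReal.tendsto_ofReal real_tendsto_aux
      simpa using this
    refine tendsto_of_tendsto_of_tendsto_of_le_of_le
      (tendsto_const_nhds : Tendsto (fun _ : ℕ => (0 : ℝ≥0∞)) atTop (nhds 0)) hb
      (fun l => zero_le) (fun l => ?_)
    refine iSup_le fun N => iSup_le fun hN => ?_
    calc (((N : ℝ≥0∞) ^ (2 * l))⁻¹ *
          ∑' x : {x : HGroup N // hdist x 0 ≤ l},
            ∑' y : {y : HGroup N // hdist y 0 ≤ l},
              ENNReal.ofReal ((N : ℝ) ^ (-((hdist x.1 y.1 : ℝ) / 2))))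
        ≤ ∑ k ∈ Finset.range (l + 1), ((2 : ℝ≥0∞) ^ (l - k))⁻¹ *
            ENNReal.ofReal ((N : ℝ) ^ (-((k : ℝ) / 2))) :=
          key_bound N l hN (fun k => ENNReal.ofReal ((N : ℝ) ^ (-((k : ℝ) / 2))))
      _ ≤ ∑ k ∈ Finset.range (l + 1), ENNReal.ofReal ((2 : ℝ) ^ (-((l : ℝ) / 2))) := by
          refine Finset.sum_le_sum fun k hk => ?_
          exact term_bound_i hN (by have := Finset.mem_range.1 hk; omega)
      _ = (l + 1) • ENNReal.ofReal ((2 : ℝ) ^ (-((l : ℝ) / 2))) := by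
          rw [Finset.sum_const, Finset.card_range]
      _ = ENNReal.ofReal (((l : ℝ) + 1) * (2 : ℝ) ^ (-((l : ℝ) / 2))) := by
          rw [nsmul_eq_mul, ← ENNReal.ofReal_natCast (l + 1),
            ← ENNReal.ofReal_mul (by positivity)]
          congr 1
          push_cast
          ring
  · -- Part (ii)
    intro c hc hsum
    classical
    set g : ℕ → ℝ≥0∞ := fun j => ENNReal.ofReal (((c j) ^ 2)⁻¹) with hg
    set T : ℕ → ℝ≥0∞ := fun k => ∑' j, if k ≤ j then g j else 0 with hT
    have hgtop : ∑' j, g j ≠ ∞ := by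
      rw [hg, ← ENNReal.ofReal_tsum_of_nonneg (fun j => by positivity) hsum]
      exact ENNReal.ofReal_ne_top
    have hT0 : T 0 ≠ ∞ := by
      have h0 : T 0 = ∑' j, g j := by rw [hT]; simp
      rw [h0]; exact hgtop
    have hTmono : ∀ k k' : ℕ, k' ≤ k → T k ≤ T k' := by
      intro k k' hkk
      refine ENNReal.tsum_le_tsum fun j => ?_
      by_cases h : k ≤ j
      · rw [if_pos h, if_pos (le_trans hkk h)]
      · rw [if_neg h]; exact zero_le
    have hTshift : ∀ k, T k = ∑' m, g (m + k) := by
      intro k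
      rw [hT]
      have hinj : Function.Injective (fun m : ℕ => m + k) := add_left_injective k
      have hsupp : Function.support (fun j => if k ≤ j then g j else 0)
          ⊆ Set.range (fun m : ℕ => m + k) := by
        intro j hj
        by_cases h : k ≤ j
        · exact ⟨j - k, by simp; omega⟩
        · exfalso; apply hj; simp [h]
      have heq := hinj.tsum_eq (f := fun j => if k ≤ j then g j else 0) hsupp
      have heq2 : ∑' (m : ℕ), (fun j => if k ≤ j then g j else 0) (m + k)
          = ∑' m, g (m + k) := tsum_congr fun m => by simp [Nat.le_add_left k m]
      exact heq.symm.trans heq2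
    have hTtend : Tendsto T atTop (nhds 0) := by
      have := ENNReal.tendsto_sum_nat_add g hgtop
      exact this.congr fun k => (hTshift k).symm
    have hB : Tendsto
        (fun l : ℕ => ∑ k ∈ Finset.range (l + 1), ((2 : ℝ≥0∞) ^ (l - k))⁻¹ * T k)
        atTop (nhds 0) := by
      rw [ENNReal.tendsto_atTop_zero]
      intro ε hε
      obtain ⟨K, hK⟩ := (ENNReal.tendsto_atTop_zero.1 hTtend) (ε / 4)
        (ENNReal.div_pos hε.ne' (by norm_num))
      have hCtop : (K : ℝ≥0∞) * T 0 ≠ ∞ :=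
        ENNReal.mul_ne_top (ENNReal.natCast_ne_top K) hT0
      have htendM : Tendsto (fun M : ℕ => (K : ℝ≥0∞) * T 0 * ((2 : ℝ≥0∞)⁻¹) ^ M)
          atTop (nhds 0) := by
        have hp := ENNReal.tendsto_pow_atTop_nhds_zero_of_lt_one
          (r := (2 : ℝ≥0∞)⁻¹) (by norm_num)
        have := ENNReal.Tendsto.const_mul (a := (K : ℝ≥0∞) * T 0) hp (Or.inr hCtop)
        simpa using this
      obtain ⟨M, hM⟩ := (ENNReal.tendsto_atTop_zero.1 htendM) (ε / 2)
        (ENNReal.div_pos hε.ne' (by norm_num))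
      refine ⟨K + M, fun l hl => ?_⟩
      have hKl : K ≤ l + 1 := by omega
      have hsplit : ∑ k ∈ Finset.range (l + 1), ((2 : ℝ≥0∞) ^ (l - k))⁻¹ * T k
          = ∑ k ∈ Finset.range K, ((2 : ℝ≥0∞) ^ (l - k))⁻¹ * T k
            + ∑ k ∈ Finset.Ico K (l + 1), ((2 : ℝ≥0∞) ^ (l - k))⁻¹ * T k := by
        rw [Finset.range_eq_Ico, ← Finset.sum_Ico_consecutive _ (Nat.zero_le K) hKl,
          ← Finset.range_eq_Ico]
      have hA : ∑ k ∈ Finset.Ico K (l + 1), ((2 : ℝ≥0∞) ^ (l - k))⁻¹ * T k ≤ ε / 2 := by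
        calc ∑ k ∈ Finset.Ico K (l + 1), ((2 : ℝ≥0∞) ^ (l - k))⁻¹ * T k
            ≤ ∑ k ∈ Finset.Ico K (l + 1), ((2 : ℝ≥0∞) ^ (l - k))⁻¹ * (ε / 4) := by
              refine Finset.sum_le_sum fun k hk => ?_
              exact mul_le_mul_right (hK k (Finset.mem_Ico.1 hk).1) _
          _ ≤ ∑ k ∈ Finset.range (l + 1), ((2 : ℝ≥0∞) ^ (l - k))⁻¹ * (ε / 4) := by
              refine Finset.sum_le_sum_of_subset ?_
              rw [Finset.range_eq_Ico]
              exact Finset.Ico_subset_Ico (Nat.zero_le K) le_rfl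
          _ = (∑ k ∈ Finset.range (l + 1), ((2 : ℝ≥0∞) ^ (l - k))⁻¹) * (ε / 4) := by
              rw [Finset.sum_mul]
          _ ≤ 2 * (ε / 4) := mul_le_mul_left (geom_sum_le_two l) _
          _ = ε / 2 := by
              rw [ENNReal.div_eq_inv_mul, ENNReal.div_eq_inv_mul, ← mul_assoc]
              congr 1
              rw [(by norm_num : (4 : ℝ≥0∞) = 2 * 2),
                ENNReal.mul_inv (Or.inl (by norm_num)) (Or.inl (by norm_num)),
                ← mul_assoc, ENNReal.mul_inv_cancel (by norm_num) (by norm_num), one_mul]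
      have hBB : ∑ k ∈ Finset.range K, ((2 : ℝ≥0∞) ^ (l - k))⁻¹ * T k ≤ ε / 2 := by
        calc ∑ k ∈ Finset.range K, ((2 : ℝ≥0∞) ^ (l - k))⁻¹ * T k
            ≤ ∑ _k ∈ Finset.range K, ((2 : ℝ≥0∞) ^ M)⁻¹ * T 0 := by
              refine Finset.sum_le_sum fun k hk => ?_
              have hkK : k < K := Finset.mem_range.1 hk
              have hMlk : M ≤ l - k := by omega
              refine mul_le_mul' ?_ (hTmono k 0 (Nat.zero_le k))
              exact ENNReal.inv_le_inv.2 (pow_le_pow_right₀ one_le_two hMlk)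
          _ = (K : ℝ≥0∞) * T 0 * ((2 : ℝ≥0∞)⁻¹) ^ M := by
              rw [Finset.sum_const, Finset.card_range, nsmul_eq_mul, ENNReal.inv_pow]
              ring
          _ ≤ ε / 2 := hM M le_rfl
      calc ∑ k ∈ Finset.range (l + 1), ((2 : ℝ≥0∞) ^ (l - k))⁻¹ * T k
          = _ + _ := hsplit
        _ ≤ ε / 2 + ε / 2 := add_le_add hBB hA
        _ = ε := ENNReal.add_halves ε
    refine tendsto_of_tendsto_of_tendsto_of_le_of_le
      (tendsto_const_nhds : Tendsto (fun _ : ℕ => (0 : ℝ≥0∞)) atTop (nhds 0)) hB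
      (fun l => zero_le) (fun l => ?_)
    refine iSup_le fun N => iSup_le fun hN => ?_
    exact key_bound N l hN T
end

section
/- Fix c > 0 and t > 0, and for each ε > 0 let X^ε be a random variable with values in [0,∞) such that E[e^{−λX^ε}] = exp(−ε v(t,λ)) for all λ ≥ 0, where v(t,λ) = 2λc e^{−ct}/(λ(1 − e^{−ct}) + 2c). Then as ε → 0: (i) ε^{−1} P(X^ε > 0) → 2c e^{−ct}/(1 − e^{−ct}); and (ii) for every λ ≥ 0, the conditional expectation E[e^{−λX^ε} | X^ε > 0] converges to 2c/(λ(1 − e^{−ct}) + 2c), which is the Laplace transform of the exponential distribution with parameter 2c/(1 − e^{−ct}); hence the conditional law of X^ε given X^ε > 0 converges to Exp(2c/(1 − e^{−ct})). -/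
open MeasureTheory Real Filter ProbabilityTheory
open Set Topology

lemma aux_integral_exp_Ioi {b : ℝ} (hb : 0 < b) :
    ∫ x in Ioi (0:ℝ), Real.exp (-(b * x)) = b⁻¹ := by
  have := integral_comp_mul_left_Ioi (fun x => Real.exp (-x)) 0 hb
  simp only [mul_zero, integral_exp_neg_Ioi, neg_zero, Real.exp_zero, smul_eq_mul,
    mul_one] at this
  exact this

lemma aux_slope (a : ℝ) :
    Tendsto (fun ε : ℝ => ε⁻¹ * (1 - Real.exp (-(ε * a))))
      (nhdsWithin 0 (Set.Ioi (0:ℝ))) (nhds a) := by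
  have h1 : HasDerivAt (fun ε : ℝ => -(ε * a)) (-a) 0 := by
    exact (hasDerivAt_mul_const a).neg
  have hd : HasDerivAt (fun ε : ℝ => 1 - Real.exp (-(ε * a))) a 0 := by
    simpa using (h1.exp).const_sub 1
  have h2 := (hasDerivAt_iff_tendsto_slope.mp hd).mono_left
    (nhdsWithin_mono 0 (fun x hx => ne_of_gt hx))
  refine h2.congr fun ε => ?_
  rw [slope_def_field]
  simp [div_eq_inv_mul]

lemma aux_exp_integral {u : ℝ} (hu : 0 < u) {lam : ℝ} (hlam : 0 ≤ lam) :
    ∫ x, Real.exp (-lam * x) ∂(expMeasure u) = u / (u + lam) := by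
  have hmeas : Measurable fun x => Real.toNNReal (gammaPDFReal 1 u x) :=
    (measurable_gammaPDFReal 1 u).real_toNNReal
  have hpdf : expMeasure u
      = volume.withDensity (fun x => (Real.toNNReal (gammaPDFReal 1 u x) : ENNReal)) := rfl
  rw [hpdf, integral_withDensity_eq_integral_smul hmeas]
  have heq : ∀ x : ℝ, (Real.toNNReal (gammaPDFReal 1 u x)) • Real.exp (-lam * x)
      = Set.indicator (Ici 0) (fun x => u * Real.exp (-((u + lam) * x))) x := by
    intro x
    rw [NNReal.smul_def, smul_eq_mul, Real.coe_toNNReal _ (gammaPDFReal_nonneg zero_lt_one hu x)]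
    unfold gammaPDFReal
    by_cases hx : 0 ≤ x
    · rw [if_pos hx, Set.indicator_of_mem (mem_Ici.mpr hx)]
      rw [Real.Gamma_one, show (1:ℝ) - 1 = 0 by ring, Real.rpow_zero, Real.rpow_one]
      rw [mul_comm, ← mul_assoc]
      norm_num
      have h : rexp (-(lam * x)) * u * rexp (-(u * x))
          = u * (rexp (-(u * x)) * rexp (-(lam * x))) := by ring
      rw [h, ← Real.exp_add]
      congr 1
      ring
    · rw [if_neg hx, Set.indicator_of_notMem (by simpa using hx)]
      simp
  simp_rw [heq]
  rw [integral_indicator measurableSet_Ici, integral_Ici_eq_integral_Ioi,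
    integral_const_mul, aux_integral_exp_Ioi (by linarith : 0 < u + lam)]
  rw [div_eq_mul_inv]

/-- Asymptotics as `ε → 0` for a family `X^ε ≥ 0` with Laplace transforms
`E[e^{−λX^ε}] = exp(−ε v(t,λ))`, `v(t,λ) = 2λc e^{−ct}/(λ(1 − e^{−ct}) + 2c)`:
(i) `ε⁻¹ P(X^ε > 0) → 2c e^{−ct}/(1 − e^{−ct})`;
(ii) for every `λ ≥ 0`, `E[e^{−λX^ε} | X^ε > 0] → 2c/(λ(1 − e^{−ct}) + 2c)`, which is the
Laplace transform of the exponential distribution with parameter `2c/(1 − e^{−ct})`; hence the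
conditional law of `X^ε` given `X^ε > 0` converges to `Exp(2c/(1 − e^{−ct}))`. -/
theorem conditional_law_convergence {Ω : Type*} [MeasurableSpace Ω]
    (P : Measure Ω) [IsProbabilityMeasure P]
    (c t : ℝ) (hc : 0 < c) (ht : 0 < t)
    (X : ℝ → Ω → ℝ)
    (hX : ∀ ε : ℝ, 0 < ε → Measurable (X ε))
    (hXnn : ∀ ε : ℝ, 0 < ε → ∀ ω, 0 ≤ X ε ω)
    (hLap : ∀ ε : ℝ, 0 < ε → ∀ lam : ℝ, 0 ≤ lam →
      ∫ ω, Real.exp (-lam * X ε ω) ∂P =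
        Real.exp (-(ε * (2 * lam * c * Real.exp (-c * t) /
          (lam * (1 - Real.exp (-c * t)) + 2 * c))))) :
    Tendsto (fun ε : ℝ => ε⁻¹ * (P {ω | 0 < X ε ω}).toReal)
        (nhdsWithin 0 (Set.Ioi (0 : ℝ)))
        (nhds (2 * c * Real.exp (-c * t) / (1 - Real.exp (-c * t)))) ∧
    (∀ lam : ℝ, 0 ≤ lam →
      Tendsto
        (fun ε : ℝ =>
          (∫ ω in {ω | 0 < X ε ω}, Real.exp (-lam * X ε ω) ∂P) /
            (P {ω | 0 < X ε ω}).toReal)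
        (nhdsWithin 0 (Set.Ioi (0 : ℝ)))
        (nhds (2 * c / (lam * (1 - Real.exp (-c * t)) + 2 * c)))) ∧
    (∀ lam : ℝ, 0 ≤ lam →
      ∫ x, Real.exp (-lam * x) ∂(expMeasure (2 * c / (1 - Real.exp (-c * t)))) =
        2 * c / (lam * (1 - Real.exp (-c * t)) + 2 * c)) := by
  have hE0 : 0 < Real.exp (-c * t) := Real.exp_pos _
  have hE1 : Real.exp (-c * t) < 1 := by
    rw [Real.exp_lt_one_iff]
    nlinarith
  set s : ℝ := 1 - Real.exp (-c * t) with hs_def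
  have hs : 0 < s := by rw [hs_def]; linarith
  set K : ℝ := 2 * c * Real.exp (-c * t) / s with hK_def
  have hK : 0 < K := div_pos (by positivity) hs
  -- measurability of the events
  have hmeasA : ∀ ε : ℝ, 0 < ε → MeasurableSet {ω | 0 < X ε ω} := fun ε hε =>
    measurableSet_lt measurable_const (hX ε hε)
  have hmeas0 : ∀ ε : ℝ, 0 < ε → MeasurableSet {ω | X ε ω = 0} := fun ε hε =>
    (hX ε hε) (measurableSet_singleton 0)
  -- integrability of the exponentials
  have hint : ∀ ε : ℝ, 0 < ε → ∀ lam : ℝ, 0 ≤ lam →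
      Integrable (fun ω => Real.exp (-lam * X ε ω)) P := by
    intro ε hε lam hlam
    refine (integrable_const (1:ℝ)).mono'
      ((Real.measurable_exp.comp ((hX ε hε).const_mul (-lam))).aestronglyMeasurable) ?_
    filter_upwards with ω
    rw [Real.norm_eq_abs, Real.abs_exp]
    exact Real.exp_le_one_iff.mpr (by nlinarith [hXnn ε hε ω])
  -- the probability of extinction
  have hPz : ∀ ε : ℝ, 0 < ε → (P {ω | X ε ω = 0}).toReal = Real.exp (-(ε * K)) := by
    intro ε hε
    have hv : Tendsto (fun n : ℕ => 2 * (n:ℝ) * c * Real.exp (-c * t) / ((n:ℝ) * s + 2 * c))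
        atTop (𝓝 K) := by
      have h2 : Tendsto (fun n : ℕ => s + 2 * c / (n:ℝ)) atTop (𝓝 (s + 0)) := by
        exact tendsto_const_nhds.add
          (Tendsto.div_atTop tendsto_const_nhds (tendsto_natCast_atTop_atTop))
      rw [add_zero] at h2
      have h1 : Tendsto (fun n : ℕ => 2 * c * Real.exp (-c * t) / (s + 2 * c / (n:ℝ)))
          atTop (𝓝 K) := by
        rw [hK_def]
        exact Tendsto.div tendsto_const_nhds h2 hs.ne'
      refine h1.congr' ?_
      filter_upwards [eventually_gt_atTop 0] with n hn
      have hn' : (0:ℝ) < n := by exact_mod_cast hn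
      have hd : (0:ℝ) < (n:ℝ) * s + 2 * c := by nlinarith
      field_simp
    have hlim1 : Tendsto (fun n : ℕ => ∫ ω, Real.exp (-(n:ℝ) * X ε ω) ∂P) atTop
        (𝓝 (Real.exp (-(ε * K)))) := by
      have : (fun n : ℕ => ∫ ω, Real.exp (-(n:ℝ) * X ε ω) ∂P)
          = fun n : ℕ => Real.exp (-(ε * (2 * (n:ℝ) * c * Real.exp (-c * t) /
              ((n:ℝ) * s + 2 * c)))) := by
        funext n
        exact hLap ε hε n (Nat.cast_nonneg n)
      rw [this]
      have := ((hv.const_mul ε).neg)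
      exact (Real.continuous_exp.tendsto _).comp this
    have hlim2 : Tendsto (fun n : ℕ => ∫ ω, Real.exp (-(n:ℝ) * X ε ω) ∂P) atTop
        (𝓝 ((P {ω | X ε ω = 0}).toReal)) := by
      rw [← Measure.real_def, ← integral_indicator_one (hmeas0 ε hε)]
      apply tendsto_integral_of_dominated_convergence (fun _ => (1:ℝ))
      · intro n
        exact (Real.measurable_exp.comp ((hX ε hε).const_mul (-(n:ℝ)))).aestronglyMeasurable
      · exact integrable_const 1
      · intro n
        filter_upwards with ω
        rw [Real.norm_eq_abs, Real.abs_exp]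
        exact Real.exp_le_one_iff.mpr
          (by nlinarith [hXnn ε hε ω, (Nat.cast_nonneg n : (0:ℝ) ≤ n)])
      · filter_upwards with ω
        by_cases h0 : X ε ω = 0
        · have hmem : ω ∈ {ω | X ε ω = 0} := h0
          simp only [Set.indicator_of_mem hmem, h0, mul_zero, Real.exp_zero]
          exact tendsto_const_nhds
        · have hx : 0 < X ε ω := lt_of_le_of_ne (hXnn ε hε ω) (Ne.symm h0)
          have hmem : ω ∉ {ω | X ε ω = 0} := h0
          rw [Set.indicator_of_notMem hmem]
          have ht1 : Tendsto (fun n : ℕ => (n:ℝ) * X ε ω) atTop atTop :=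
            Tendsto.atTop_mul_const hx tendsto_natCast_atTop_atTop
          have := tendsto_exp_neg_atTop_nhds_zero.comp ht1
          refine this.congr fun n => ?_
          simp [Function.comp, neg_mul]
    exact tendsto_nhds_unique hlim2 hlim1
  have hP : ∀ ε : ℝ, 0 < ε → (P {ω | 0 < X ε ω}).toReal = 1 - Real.exp (-(ε * K)) := by
    intro ε hε
    have hcompl : {ω | 0 < X ε ω} = {ω | X ε ω = 0}ᶜ := by
      ext ω
      simp only [Set.mem_setOf_eq, Set.mem_compl_iff]
      constructor
      · intro h h0; rw [h0] at h; exact lt_irrefl 0 h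
      · intro h; exact lt_of_le_of_ne (hXnn ε hε ω) (Ne.symm h)
    rw [hcompl, measure_compl (hmeas0 ε hε) (measure_ne_top P _), measure_univ,
      ENNReal.toReal_sub_of_le prob_le_one ENNReal.one_ne_top, ENNReal.toReal_one,
      hPz ε hε]
  -- set integral identity
  have hSet : ∀ ε : ℝ, 0 < ε → ∀ lam : ℝ, 0 ≤ lam →
      ∫ ω in {ω | 0 < X ε ω}, Real.exp (-lam * X ε ω) ∂P
        = Real.exp (-(ε * (2 * lam * c * Real.exp (-c * t) / (lam * s + 2 * c))))
          - Real.exp (-(ε * K)) := by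
    intro ε hε lam hlam
    have hsplit := integral_add_compl (hmeasA ε hε) (hint ε hε lam hlam)
    have hcomplInt : ∫ ω in {ω | 0 < X ε ω}ᶜ, Real.exp (-lam * X ε ω) ∂P
        = Real.exp (-(ε * K)) := by
      have heq1 : ∀ ω ∈ {ω | 0 < X ε ω}ᶜ, Real.exp (-lam * X ε ω) = 1 := by
        intro ω hω
        have h0 : X ε ω = 0 := le_antisymm (not_lt.mp hω) (hXnn ε hε ω)
        simp [h0]
      rw [setIntegral_congr_fun (hmeasA ε hε).compl heq1, setIntegral_const, smul_eq_mul,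
        mul_one]
      have : (P {ω | 0 < X ε ω}ᶜ).toReal = 1 - (P {ω | 0 < X ε ω}).toReal := by
        rw [measure_compl (hmeasA ε hε) (measure_ne_top P _), measure_univ,
          ENNReal.toReal_sub_of_le prob_le_one ENNReal.one_ne_top, ENNReal.toReal_one]
      rw [Measure.real_def, this, hP ε hε]
      ring
    have htot := hLap ε hε lam hlam
    rw [hcomplInt] at hsplit
    rw [← hsplit] at htot
    linarith [htot]
  refine ⟨?_, ?_, ?_⟩
  · refine ((aux_slope K).congr' ?_)
    refine eventually_nhdsWithin_of_forall fun ε hε => ?_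
    show ε⁻¹ * (1 - Real.exp (-(ε * K))) = ε⁻¹ * (P {ω | 0 < X ε ω}).toReal
    rw [hP ε hε]
  · intro lam hlam
    set v : ℝ := 2 * lam * c * Real.exp (-c * t) / (lam * s + 2 * c) with hv_def
    have hd2 : (0:ℝ) < lam * s + 2 * c := by nlinarith
    have hnum : Tendsto (fun ε : ℝ => ε⁻¹ * (Real.exp (-(ε * v)) - Real.exp (-(ε * K))))
        (nhdsWithin 0 (Set.Ioi (0:ℝ))) (nhds (K - v)) := by
      have := (aux_slope K).sub (aux_slope v)
      refine this.congr fun ε => ?_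
      ring
    have hdiv := hnum.div (aux_slope K) hK.ne'
    have hval : (K - v) / K = 2 * c / (lam * s + 2 * c) := by
      rw [hK_def, hv_def]
      field_simp
      ring
    rw [hval] at hdiv
    refine hdiv.congr' ?_
    refine eventually_nhdsWithin_of_forall fun ε hε => ?_
    have hε' : (0:ℝ) < ε := hε
    show ε⁻¹ * (Real.exp (-(ε * v)) - Real.exp (-(ε * K))) / (ε⁻¹ * (1 - Real.exp (-(ε * K))))
      = (∫ ω in {ω | 0 < X ε ω}, Real.exp (-lam * X ε ω) ∂P) / (P {ω | 0 < X ε ω}).toReal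
    rw [mul_div_mul_left _ _ (inv_ne_zero hε'.ne'), hSet ε hε' lam hlam, hP ε hε',
      ← hv_def]
  · intro lam hlam
    have hu : 0 < 2 * c / s := div_pos (by linarith) hs
    rw [aux_exp_integral hu hlam]
    field_simp
    ring
end
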